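/- Let X be a nonempty finite type, D_0, D_1 distributions on X, and ε ∈ (0,1). Set D_X := (1−ε)·D_0 + ε·D_1 and let g be the associated tilted posterior function. If h : X → [0,1] is γ-calibrated for g under D_X, then for every function w : ℝ → [0,1]: |E_{D_1}[w∘h] − (1/ε)·E_{D_X}[h·(w∘h)]| ≤ γ/ε. -/

import Mathlib

/-- Expectation of `f` under the (finitely supported) distribution `D`. -/
noncomputable def expect {X : Type*} [Fintype X] (D f : X → ℝ) : ℝ := ∑ x, D x * f x

/-- `D` is a probability distribution on the finite type `X`. -/
def IsDist {X : Type*} [Fintype X] (D : X → ℝ) : Prop := (∀ x, 0 ≤ D x) ∧ ∑ x, D x = 1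

theorem stmt_14 {X : Type*} [Fintype X] [Nonempty X]
    (D0 D1 : X → ℝ) (hD0 : IsDist D0) (hD1 : IsDist D1)
    (ε : ℝ) (hε : ε ∈ Set.Ioo (0:ℝ) 1)
    (DX : X → ℝ) (hDX : DX = fun x => (1 - ε) * D0 x + ε * D1 x)
    (g : X → ℝ)
    (hg : g = fun x => if 0 < DX x then ε * D1 x / DX x else 0)
    (γ : ℝ)
    (h : X → ℝ) (hh : ∀ x, h x ∈ Set.Icc (0:ℝ) 1)
    (hcal : ∀ w : ℝ → ℝ, (∀ t, w t ∈ Set.Icc (0:ℝ) 1) →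
      |expect DX (fun x => w (h x) * (g x - h x))| ≤ γ) :
    ∀ w : ℝ → ℝ, (∀ t, w t ∈ Set.Icc (0:ℝ) 1) →
      |expect D1 (fun x => w (h x)) - (1/ε) * expect DX (fun x => h x * w (h x))| ≤ γ / ε := by
  intro w hw
  obtain ⟨hε0, hε1⟩ := hε
  have hkey : ∀ x, DX x * g x = ε * D1 x := by
    intro x
    by_cases hx : 0 < DX x
    · simp only [hg, if_pos hx]
      field_simp
    · have heq : DX x = (1 - ε) * D0 x + ε * D1 x := by simp [hDX]
      have hDXnn : 0 ≤ DX x := by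
        have := hD0.1 x; have := hD1.1 x
        rw [heq]; nlinarith
      have hDX0 : DX x = 0 := le_antisymm (not_lt.mp hx) hDXnn
      have hD10 : D1 x = 0 := by
        have h0 := hD0.1 x; have h1 := hD1.1 x
        have : (1 - ε) * D0 x + ε * D1 x = 0 := by rw [← heq]; exact hDX0
        nlinarith
      simp [hDX0, hD10]
  have hexp : expect D1 (fun x => w (h x)) =
      (1/ε) * ∑ x, DX x * (w (h x) * g x) := by
    rw [Finset.mul_sum, expect]
    congr 1; ext x
    have : DX x * (w (h x) * g x) = (DX x * g x) * w (h x) := by ring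
    rw [this, hkey x]
    field_simp
  rw [hexp, expect, ← mul_sub, ← Finset.sum_sub_distrib]
  have hsum : (∑ x, (DX x * (w (h x) * g x) - DX x * (h x * w (h x)))) =
      expect DX (fun x => w (h x) * (g x - h x)) := by
    rw [expect]; congr 1; ext x; ring
  rw [hsum, abs_mul, abs_of_pos (by positivity : (0:ℝ) < 1/ε)]
  rw [div_eq_mul_inv γ ε, mul_comm γ ε⁻¹, ← one_div]
  exact mul_le_mul_of_nonneg_left (hcal w hw) (by positivity)
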